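/- Let n ≥ 3 be an integer and let ŷ ∈ ℝⁿ satisfy rank(H₂(ŷ)) = 2, where H₂(ŷ) ∈ ℝ^{2×(n−1)} is the 2-row Hankel matrix of ŷ. Then there exists ȳ ∈ ℝⁿ with rank(H₂(ȳ)) = 1 and ‖ȳ − ŷ‖ < ‖ŷ‖. -/

import Mathlib

/-- The 2-row Hankel operator `H₂ : ℝⁿ → ℝ^{2×(n-1)}` (0-based indices):
`(H₂ y)(i,j) = y (i + j)`. -/
def hankel2 (n : ℕ) (hn : 1 < n) (y : EuclideanSpace ℝ (Fin n)) :
    Matrix (Fin 2) (Fin (n - 1)) ℝ :=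
  fun i j => y ⟨i.val + j.val, by omega⟩

lemma range_fin2 {α : Type*} (f : Fin 2 → α) : Set.range f = {f 0, f 1} := by
  ext x
  constructor
  · rintro ⟨i, rfl⟩; fin_cases i <;> simp
  · rintro (rfl | rfl) <;> [exact ⟨0, rfl⟩; exact ⟨1, rfl⟩]

lemma rank_hankel_geom (n : ℕ) (hn : 1 < n) (s r : ℝ) (hs : s ≠ 0) :
    Matrix.rank (hankel2 n hn (WithLp.toLp 2 (fun i : Fin n => s * r ^ (i : ℕ)))) = 1 := by
  set A : Matrix (Fin 2) (Fin (n - 1)) ℝ :=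
    hankel2 n hn (WithLp.toLp 2 (fun i : Fin n => s * r ^ (i : ℕ))) with hA
  have hA0 : A 0 ≠ 0 := by
    intro h
    have h0 : (0 : ℕ) < n - 1 := by omega
    have := congrFun h ⟨0, h0⟩
    simp [hA, hankel2] at this
    exact hs this
  have hA1 : A 1 = r • A 0 := by
    funext j
    simp only [hA, hankel2, WithLp.ofLp_toLp, Pi.smul_apply, smul_eq_mul, Fin.val_one, Fin.val_zero]
    ring
  rw [Matrix.rank_eq_finrank_span_row]
  have hrange : Set.range A = {A 0, A 1} := range_fin2 A
  have hspan : Submodule.span ℝ (Set.range A) = Submodule.span ℝ {A 0} := by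
    rw [hrange]
    apply le_antisymm
    · rw [Submodule.span_le]
      rintro x (rfl | rfl)
      · exact Submodule.subset_span rfl
      · rw [hA1]
        exact Submodule.smul_mem _ r (Submodule.subset_span rfl)
    · exact Submodule.span_mono (by simp)
  rw [show A.row = A from rfl, hspan]
  exact finrank_span_singleton hA0

/-- if `n ≥ 3` and `rank(H₂(ŷ)) = 2`, then there exists `ȳ` with
`rank(H₂(ȳ)) = 1` and `‖ȳ − ŷ‖ < ‖ŷ‖`. -/
theorem stmt11 (n : ℕ) (hn : 3 ≤ n)
    (yhat : EuclideanSpace ℝ (Fin n))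
    (hyhat : Matrix.rank (hankel2 n (by omega) yhat) = 2) :
    ∃ ybar : EuclideanSpace ℝ (Fin n),
      Matrix.rank (hankel2 n (by omega) ybar) = 1 ∧ ‖ybar - yhat‖ < ‖yhat‖ := by
  have hn1 : 1 < n := by omega
  -- yhat ≠ 0
  have hy0 : yhat ≠ 0 := by
    intro h
    rw [h] at hyhat
    have : hankel2 n (by omega) (0 : EuclideanSpace ℝ (Fin n)) = 0 := by
      funext i j; simp [hankel2]
    rw [this, Matrix.rank_zero] at hyhat
    exact two_ne_zero hyhat.symm
  -- find r with ∑ yhat i * r^i ≠ 0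
  obtain ⟨r, hr⟩ : ∃ r : ℝ, (∑ i : Fin n, yhat i * r ^ (i : ℕ)) ≠ 0 := by
    by_contra h
    push_neg at h
    apply hy0
    set p : Polynomial ℝ := ∑ i : Fin n, Polynomial.monomial (i : ℕ) (yhat i) with hp
    have hpz : p = 0 := by
      apply Polynomial.funext
      intro x
      simp [hp, Polynomial.eval_finset_sum, Polynomial.eval_monomial, h x]
    ext i
    have := congrArg (fun q => Polynomial.coeff q (i : ℕ)) hpz
    simpa [hp, Polynomial.finset_sum_coeff, Polynomial.coeff_monomial, Fin.val_inj,
      Finset.sum_ite_eq] using this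
  -- set up v, s
  set v : EuclideanSpace ℝ (Fin n) := WithLp.toLp 2 (fun i => r ^ (i : ℕ)) with hv
  have hvne : v ≠ 0 := by
    intro h
    have h1 := congrArg (fun w : EuclideanSpace ℝ (Fin n) => w ⟨0, by omega⟩) h
    simp [hv] at h1
  have hvnorm : (0:ℝ) < ‖v‖ ^ 2 := pow_pos (norm_pos_iff.mpr hvne) 2
  set c : ℝ := (inner ℝ v yhat : ℝ) with hc
  have hcne : c ≠ 0 := by
    have : c = ∑ i : Fin n, yhat i * r ^ (i : ℕ) := by
      simp [hc, PiLp.inner_apply, hv, RCLike.inner_apply]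
    rw [this]; exact hr
  set s : ℝ := c / ‖v‖ ^ 2 with hs
  have hsne : s ≠ 0 := div_ne_zero hcne (ne_of_gt hvnorm)
  refine ⟨s • v, ?_, ?_⟩
  · have : (s • v : EuclideanSpace ℝ (Fin n)) = WithLp.toLp 2 (fun i : Fin n => s * r ^ (i : ℕ)) := by
      ext i; simp [hv]
    rw [this]
    exact rank_hankel_geom n hn1 s r hsne
  · have hsq : ‖s • v - yhat‖ ^ 2 < ‖yhat‖ ^ 2 := by
      have hexp : ‖s • v - yhat‖ ^ 2 = ‖s • v‖ ^ 2 - 2 * (inner ℝ (s • v) yhat : ℝ) + ‖yhat‖ ^ 2 :=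
        norm_sub_sq_real _ _
      have h1 : ‖s • v‖ ^ 2 = s ^ 2 * ‖v‖ ^ 2 := by
        rw [norm_smul]
        simp [mul_pow, sq_abs]
      have h2 : (inner ℝ (s • v) yhat : ℝ) = s * c := real_inner_smul_left v yhat s
      rw [hexp, h1, h2]
      have hkey : s ^ 2 * ‖v‖ ^ 2 - 2 * (s * c) = - (c ^ 2 / ‖v‖ ^ 2) := by
        rw [hs]; field_simp; ring
      rw [hkey]
      have : 0 < c ^ 2 / ‖v‖ ^ 2 := div_pos (by positivity) hvnorm
      linarith
    exact lt_of_pow_lt_pow_left₀ 2 (norm_nonneg yhat) hsq
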